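/- Suppose V₁, V₂ : ℝ → ℝ≥0 are C¹ along solutions and satisfy V̇₁ ≤ −(1/2)|e_p|² + (γ₁²/2)v̄², V̇₂ ≤ −(1/2)v̄² + (γ₂²/2)e_x², with |e_x| ≤ |e_p| and γ₁γ₂ < 1, and additionally c₁|e_p|² ≤ V₁, c₂v̄² ≤ V₂ for constants c₁, c₂ > 0. Then for any λ ∈ (γ₁, 1/γ₂), V := V₁ + λ²V₂ satisfies V̇ ≤ −ε(|e_p|² + v̄²) along solutions for ε := (1/2)min{1 − λ²γ₂², λ² − γ₁²} > 0, and hence V(t) ≤ V(0)e^{−(ε/c)t} with c := max{upper quadratic bounds}, giving exponential convergence of (e_p, v̄) to zero whenever V₁, V₂ are also quadratically upper bounded. -/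

import Mathlib

theorem combined_strict_lyapunov
    (ex ey vbar V₁ V₂ d₁ d₂ : ℝ → ℝ)
    (γ₁ γ₂ lam c₁ c₂ C₁ C₂ ε c : ℝ)
    (hγ₁ : 0 ≤ γ₁) (hγ₂ : 0 ≤ γ₂) (hsg : γ₁ * γ₂ < 1)
    (hlam₁ : γ₁ < lam) (hlam₂ : lam < 1 / γ₂ ∨ γ₂ = 0)
    (hc₁ : 0 < c₁) (hc₂ : 0 < c₂)
    (hV₁nonneg : ∀ t, 0 ≤ V₁ t) (hV₂nonneg : ∀ t, 0 ≤ V₂ t)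
    (hd₁ : ∀ t, HasDerivAt V₁ (d₁ t) t)
    (hd₂ : ∀ t, HasDerivAt V₂ (d₂ t) t)
    (hdiss₁ : ∀ t, d₁ t ≤ -(1 / 2) * ((ex t) ^ 2 + (ey t) ^ 2) + (γ₁ ^ 2 / 2) * (vbar t) ^ 2)
    (hdiss₂ : ∀ t, d₂ t ≤ -(1 / 2) * (vbar t) ^ 2 + (γ₂ ^ 2 / 2) * (ex t) ^ 2)
    (hlow₁ : ∀ t, c₁ * ((ex t) ^ 2 + (ey t) ^ 2) ≤ V₁ t)
    (hlow₂ : ∀ t, c₂ * (vbar t) ^ 2 ≤ V₂ t)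
    (hup₁ : ∀ t, V₁ t ≤ C₁ * ((ex t) ^ 2 + (ey t) ^ 2))
    (hup₂ : ∀ t, V₂ t ≤ C₂ * (vbar t) ^ 2)
    (hε : ε = (1 / 2) * min (1 - lam ^ 2 * γ₂ ^ 2) (lam ^ 2 - γ₁ ^ 2))
    (hc : c = max C₁ (lam ^ 2 * C₂)) (hcpos : 0 < c) :
    (0 < ε) ∧
    (∀ t, d₁ t + lam ^ 2 * d₂ t ≤ -ε * ((ex t) ^ 2 + (ey t) ^ 2 + (vbar t) ^ 2)) ∧
    (∀ t : ℝ, 0 ≤ t →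
      V₁ t + lam ^ 2 * V₂ t ≤ (V₁ 0 + lam ^ 2 * V₂ 0) * Real.exp (-(ε / c) * t)) := by
  have hlampos : 0 < lam := lt_of_le_of_lt hγ₁ hlam₁
  have h1 : 0 < lam ^ 2 - γ₁ ^ 2 := by nlinarith
  have h2 : 0 < 1 - lam ^ 2 * γ₂ ^ 2 := by
    rcases hlam₂ with h | h
    · rcases eq_or_lt_of_le hγ₂ with h0 | h0
      · rw [← h0]; norm_num
      · have hlg : lam * γ₂ < 1 := (lt_div_iff₀ h0).mp h
        have hp : 0 < lam * γ₂ := mul_pos hlampos h0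
        have := mul_lt_mul_of_pos_left hlg hp
        nlinarith
    · rw [h]; nlinarith
  have hεpos : 0 < ε := by
    rw [hε]
    have := lt_min h2 h1
    linarith
  have hε1 : ε ≤ (1/2) * (1 - lam ^ 2 * γ₂ ^ 2) := by
    rw [hε]; have := min_le_left (1 - lam ^ 2 * γ₂ ^ 2) (lam ^ 2 - γ₁ ^ 2); linarith
  have hε2 : ε ≤ (1/2) * (lam ^ 2 - γ₁ ^ 2) := by
    rw [hε]; have := min_le_right (1 - lam ^ 2 * γ₂ ^ 2) (lam ^ 2 - γ₁ ^ 2); linarith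
  have hεhalf : ε ≤ 1/2 := by nlinarith [sq_nonneg (lam * γ₂)]
  have hdiss : ∀ t, d₁ t + lam ^ 2 * d₂ t ≤
      -ε * ((ex t) ^ 2 + (ey t) ^ 2 + (vbar t) ^ 2) := by
    intro t
    have h2' := mul_le_mul_of_nonneg_left (hdiss₂ t) (sq_nonneg lam)
    have h1' := hdiss₁ t
    nlinarith [sq_nonneg (ex t), sq_nonneg (ey t), sq_nonneg (vbar t)]
  refine ⟨hεpos, hdiss, ?_⟩
  set k := ε / c with hk
  have hkpos : 0 < k := div_pos hεpos hcpos
  set V : ℝ → ℝ := fun t => V₁ t + lam ^ 2 * V₂ t with hV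
  have hVderiv : ∀ t, HasDerivAt V (d₁ t + lam ^ 2 * d₂ t) t := fun t =>
    (hd₁ t).add ((hd₂ t).const_mul _)
  have hVup : ∀ t, V t ≤ c * ((ex t) ^ 2 + (ey t) ^ 2 + (vbar t) ^ 2) := by
    intro t
    simp only [hV]
    have h1' := hup₁ t
    have h2' := mul_le_mul_of_nonneg_left (hup₂ t) (sq_nonneg lam)
    have hC1 : C₁ ≤ c := hc ▸ le_max_left _ _
    have hC2 : lam ^ 2 * C₂ ≤ c := hc ▸ le_max_right _ _
    nlinarith [mul_le_mul_of_nonneg_right hC1 (by positivity : (0:ℝ) ≤ ex t ^ 2 + ey t ^ 2),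
      mul_le_mul_of_nonneg_right hC2 (sq_nonneg (vbar t))]
  set g : ℝ → ℝ := fun t => V t * Real.exp (k * t) with hg
  have hgderiv : ∀ t, HasDerivAt g
      ((d₁ t + lam ^ 2 * d₂ t + k * V t) * Real.exp (k * t)) t := by
    intro t
    have he : HasDerivAt (fun t => Real.exp (k * t)) (k * Real.exp (k * t)) t := by
      have := ((hasDerivAt_id t).const_mul k).exp
      simpa [mul_comm] using this
    have := (hVderiv t).mul he
    exact this.congr_deriv (by ring)
  have hgd_nonpos : ∀ t, (d₁ t + lam ^ 2 * d₂ t + k * V t) * Real.exp (k * t) ≤ 0 := by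
    intro t
    apply mul_nonpos_of_nonpos_of_nonneg _ (Real.exp_nonneg _)
    have h1' := hdiss t
    have h2' : k * V t ≤ ε * ((ex t) ^ 2 + (ey t) ^ 2 + (vbar t) ^ 2) := by
      have := mul_le_mul_of_nonneg_left (hVup t) (le_of_lt hkpos)
      calc k * V t ≤ k * (c * ((ex t) ^ 2 + (ey t) ^ 2 + (vbar t) ^ 2)) := this
        _ = ε * ((ex t) ^ 2 + (ey t) ^ 2 + (vbar t) ^ 2) := by
            rw [hk]; field_simp [hcpos.ne']
    linarith
  have hanti : Antitone g := by
    apply antitone_of_deriv_nonpos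
    · exact fun t => (hgderiv t).differentiableAt
    · intro t
      rw [(hgderiv t).deriv]
      exact hgd_nonpos t
  intro t ht
  have := hanti ht
  have hg0 : g 0 = V 0 := by simp [hg]
  have hgt : V t * Real.exp (k * t) ≤ V 0 := by
    rw [← hg0]; exact this
  have hexp : 0 < Real.exp (k * t) := Real.exp_pos _
  have : V t ≤ V 0 * Real.exp (-(k * t)) := by
    rw [Real.exp_neg, ← div_eq_mul_inv, le_div_iff₀ hexp]
    exact hgt
  simpa [hk, neg_mul] using this
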